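/- Let m ≥ 1, let O ⊆ ℝ^m be a nonempty open convex set, let f : O → ℝ be convex, and let X ⊆ O be a nonempty compact convex set. Suppose (f_t)_{t∈T} is a lower-C² representation of f on an open set O' with X ⊆ O' ⊆ O, and let K_f ≥ 0 be such that for every t ∈ T the gradient ∇f_t is K_f-Lipschitz on X. Let Y = (y₀, y₁, ..., y_m) be a poised tuple of points with y₀ ∈ X, set Δ = max_{1≤i≤m} ‖y_i − y₀‖, and suppose the closed ball B(y₀; Δ) is contained in X. Let y ∈ B(y₀; Δ), let r ≥ 1, let t₁, ..., t_r ∈ A(y) (the active set of the representation at y), let λ ∈ ℝ^r with λ_i ∈ [0,1] and Σ_{i=1}^r λ_i = 1, for each i let F_{t_i} be the linear interpolation model of f_{t_i} over Y, and set V = Σ_{i=1}^r λ_i ∇F_{t_i}(y). Then there exists v ∈ ∂f(y) such that ‖V − v‖ ≤ K_f·(1 + √m·‖L̂⁻¹‖/2)·Δ. -/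

import Mathlib

set_option synthInstance.maxHeartbeats 1000000
set_option maxHeartbeats 1000000
open scoped RealInnerProductSpace
def subdiff {m : ℕ} (O : Set (EuclideanSpace ℝ (Fin m)))
    (f : EuclideanSpace ℝ (Fin m) → ℝ) (x : EuclideanSpace ℝ (Fin m)) :
    Set (EuclideanSpace ℝ (Fin m)) :=
  {v | ∀ y ∈ O, f x + ⟪v, y - x⟫ ≤ f y}

/-- `(ft t)_{t ∈ T}` is a lower-C² representation of `f` on the set `V`: each `ft t`
is C² on `V`, the values, gradients and Hessians depend continuously on
`(t, x) ∈ T × V`, and `f = max_{t ∈ T} ft t` on `V` (the maximum being attained). -/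
def IsLowerC2Rep {m : ℕ} (T : Type) [TopologicalSpace T]
    (f : EuclideanSpace ℝ (Fin m) → ℝ)
    (ft : T → EuclideanSpace ℝ (Fin m) → ℝ)
    (V : Set (EuclideanSpace ℝ (Fin m))) : Prop :=
  (∀ t : T, ContDiffOn ℝ 2 (ft t) V) ∧
  ContinuousOn (fun p : T × EuclideanSpace ℝ (Fin m) => ft p.1 p.2)
    (Set.univ ×ˢ V) ∧
  ContinuousOn (fun p : T × EuclideanSpace ℝ (Fin m) => gradient (ft p.1) p.2)
    (Set.univ ×ˢ V) ∧
  ContinuousOn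
    (fun p : T × EuclideanSpace ℝ (Fin m) => fderiv ℝ (gradient (ft p.1)) p.2)
    (Set.univ ×ˢ V) ∧
  (∀ x ∈ V, (∀ t : T, ft t x ≤ f x) ∧ (∃ t : T, ft t x = f x))

/-- A tuple `Y = (y₀, …, y_m)` of points of `ℝ^m` is poised if the `(m+1)×(m+1)` matrix
whose `i`-th row is `(1, yᵢ)` is invertible. -/
def Poised {m : ℕ} (Y : Fin (m + 1) → EuclideanSpace ℝ (Fin m)) : Prop :=
  (Matrix.of fun i : Fin (m + 1) => Fin.cons (1 : ℝ) (fun j : Fin m => Y i j)).det ≠ 0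

/-- The spectral norm of a square real matrix, i.e. the operator norm of the induced
map on Euclidean space. -/
noncomputable def specNorm {n : ℕ} (M : Matrix (Fin n) (Fin n) ℝ) : ℝ :=
  ‖(Matrix.toEuclideanCLM (𝕜 := ℝ) M :
      EuclideanSpace ℝ (Fin n) →L[ℝ] EuclideanSpace ℝ (Fin n))‖

/-- The matrix `L(Y)` whose `i`-th row is `yᵢ - y₀`, for `i = 1, …, m`. -/
noncomputable def Lmat {m : ℕ} (Y : Fin (m + 1) → EuclideanSpace ℝ (Fin m)) :
    Matrix (Fin m) (Fin m) ℝ :=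
  Matrix.of fun i j : Fin m => (Y i.succ - Y 0) j


-- Lemma: gradient of affine function
lemma gradAffine {m : ℕ} (a₀ : ℝ) (a y : EuclideanSpace ℝ (Fin m)) :
    HasGradientAt (fun x => a₀ + ⟪a, x⟫) a y := by
  rw [hasGradientAt_iff_hasFDerivAt]
  have h : HasFDerivAt (fun x : EuclideanSpace ℝ (Fin m) => a₀ + (InnerProductSpace.toDual ℝ _ a) x)
      (InnerProductSpace.toDual ℝ _ a) y :=
    ((InnerProductSpace.toDual ℝ _ a).hasFDerivAt).const_add a₀
  simpa [InnerProductSpace.toDual_apply_apply] using h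
lemma taylor_quad {m : ℕ} (g : EuclideanSpace ℝ (Fin m) → ℝ)
    (U : Set (EuclideanSpace ℝ (Fin m))) (hU : IsOpen U)
    (a b : EuclideanSpace ℝ (Fin m)) (K : ℝ)
    (hseg : ∀ s ∈ Set.Icc (0:ℝ) 1, a + s • (b - a) ∈ U)
    (hdiff : DifferentiableOn ℝ g U)
    (hlip : ∀ s ∈ Set.Icc (0:ℝ) 1,
      ‖gradient g (a + s • (b - a)) - gradient g a‖ ≤ K * (s * ‖b - a‖)) :
    |g b - g a - ⟪gradient g a, b - a⟫| ≤ K / 2 * ‖b - a‖ ^ 2 := by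
  set d := b - a with hd
  set h : ℝ → ℝ := fun s => g (a + s • d) - s * ⟪gradient g a, d⟫ with hh
  have hderiv : ∀ s ∈ Set.Icc (0:ℝ) 1,
      HasDerivAt h (⟪gradient g (a + s • d) - gradient g a, d⟫) s := by
    intro s hs
    have h1 : HasDerivAt (fun s : ℝ => a + s • d) d s := by
      simpa using ((hasDerivAt_id s).smul_const d).const_add a
    have hg : HasGradientAt g (gradient g (a + s • d)) (a + s • d) :=
      (hdiff.differentiableAt (hU.mem_nhds (hseg s hs))).hasGradientAt
    have h2 : HasDerivAt (fun s : ℝ => g (a + s • d)) (⟪gradient g (a + s • d), d⟫) s := by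
      have := (hg.hasFDerivAt).comp_hasDerivAt s h1
      simpa [InnerProductSpace.toDual_apply_apply, Function.comp_def] using this
    have h3 : HasDerivAt (fun s : ℝ => s * ⟪gradient g a, d⟫) ⟪gradient g a, d⟫ s := by
      simpa using (hasDerivAt_id s).mul_const (⟪gradient g a, d⟫)
    simpa [hh, inner_sub_left, Pi.sub_def] using h2.sub h3
  set C : ℝ := K / 2 * ‖d‖ ^ 2 with hC
  have key : ∀ x ∈ Set.Icc (0:ℝ) 1, ‖(h x - h 0 : ℝ)‖ ≤ C * x ^ 2 := by
    have hf : ContinuousOn (fun s => h s - h 0) (Set.Icc 0 1) := fun s hs =>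
      ((hderiv s hs).continuousAt.sub continuousAt_const).continuousWithinAt
    have hf' : ∀ s ∈ Set.Ico (0:ℝ) 1, HasDerivWithinAt (fun s => h s - h 0)
        (⟪gradient g (a + s • d) - gradient g a, d⟫) (Set.Ici s) s := fun s hs =>
      (((hderiv s (Set.mem_Icc_of_Ico hs)).sub_const (h 0))).hasDerivWithinAt
    have hB : ∀ x : ℝ, HasDerivAt (fun s => C * s ^ 2) (C * (2 * x)) x := by
      intro x
      simpa using ((hasDerivAt_pow 2 x).const_mul C)
    have bound : ∀ s ∈ Set.Ico (0:ℝ) 1,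
        ‖(⟪gradient g (a + s • d) - gradient g a, d⟫ : ℝ)‖ ≤ C * (2 * s) := by
      intro s hs
      have h1 : ‖(⟪gradient g (a + s • d) - gradient g a, d⟫ : ℝ)‖
          ≤ ‖gradient g (a + s • d) - gradient g a‖ * ‖d‖ := norm_inner_le_norm _ _
      have h2 := hlip s (Set.mem_Icc_of_Ico hs)
      calc ‖(⟪gradient g (a + s • d) - gradient g a, d⟫ : ℝ)‖
          ≤ ‖gradient g (a + s • d) - gradient g a‖ * ‖d‖ := h1
        _ ≤ (K * (s * ‖d‖)) * ‖d‖ := by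
            apply mul_le_mul_of_nonneg_right h2 (norm_nonneg _)
        _ = C * (2 * s) := by rw [hC]; ring
    have ha : ‖(h 0 - h 0 : ℝ)‖ ≤ C * 0 ^ 2 := by simp
    intro x hx
    have := image_norm_le_of_norm_deriv_right_le_deriv_boundary hf hf' ha hB bound hx
    simpa using this
  have h1v : h 1 = g b - ⟪gradient g a, d⟫ := by
    simp [hh, hd]
  have h0v : h 0 = g a := by simp [hh]
  have := key 1 (by norm_num)
  rw [h1v, h0v] at this
  simpa [Real.norm_eq_abs, sub_sub, add_comm] using this
lemma Lmat_det_ne_zero {m : ℕ} (Y : Fin (m + 1) → EuclideanSpace ℝ (Fin m))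
    (hp : Poised Y) : (Lmat Y).det ≠ 0 := by
  intro hdet
  obtain ⟨c, hc0, hc⟩ := (Matrix.exists_vecMul_eq_zero_iff).2 hdet
  apply hp
  rw [← Matrix.exists_vecMul_eq_zero_iff]
  refine ⟨Fin.cons (-(∑ i, c i)) c, ?_, ?_⟩
  · intro h
    apply hc0
    funext i
    have := congrFun h i.succ
    simpa using this
  · funext j
    have hrow : ∀ k : Fin m, (Matrix.vecMul c (Lmat Y)) k = 0 := fun k => congrFun hc k
    rcases Fin.eq_zero_or_eq_succ j with rfl | ⟨k, rfl⟩
    · simp [Matrix.vecMul, dotProduct, Fin.sum_univ_succ]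
    · have := hrow k
      simp only [Matrix.vecMul, dotProduct, Lmat, Matrix.of_apply] at this ⊢
      simp only [Fin.sum_univ_succ, Fin.cons_zero, Fin.cons_succ, Matrix.of_apply,
        Fin.cons_succ]
      simp only [PiLp.sub_apply] at this
      have hsum : ∑ i, c i * (Y i.succ k - Y 0 k) = 0 := this
      have : ∑ i, c i * Y i.succ k = (∑ i, c i) * Y 0 k := by
        rw [Finset.sum_mul]
        have := hsum
        rw [Finset.sum_congr rfl (fun i _ => mul_sub (c i) (Y i.succ k) (Y 0 k))] at this
        rw [Finset.sum_sub_distrib] at this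
        linarith [this]
      simp [this]

lemma delta_pos {m : ℕ} (hm : 1 ≤ m) (Y : Fin (m + 1) → EuclideanSpace ℝ (Fin m))
    (hp : Poised Y) {Δ : ℝ}
    (hΔ : IsGreatest (Set.range fun i : Fin m => ‖Y i.succ - Y 0‖) Δ) : 0 < Δ := by
  have hne : Nonempty (Fin m) := ⟨⟨0, hm⟩⟩
  obtain ⟨i₀, hi₀⟩ := hΔ.1
  have h0 : 0 ≤ Δ := hi₀ ▸ norm_nonneg _
  rcases h0.lt_or_eq with h | h
  · exact h
  · exfalso
    apply Lmat_det_ne_zero Y hp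
    have : Lmat Y = 0 := by
      funext i j
      have hle : ‖Y i.succ - Y 0‖ ≤ Δ := hΔ.2 ⟨i, rfl⟩
      rw [← h] at hle
      have : Y i.succ - Y 0 = 0 := norm_le_zero_iff.1 hle
      simp only [Lmat, Matrix.of_apply, Matrix.zero_apply, PiLp.sub_apply]
      have h2 : (Y i.succ - Y 0) j = 0 := by rw [this]; rfl
      simpa using h2
    rw [this]
    exact Matrix.det_zero

lemma norm_le_sqrt_mul {n : ℕ} (u : EuclideanSpace ℝ (Fin n)) (c : ℝ) (hc : 0 ≤ c)
    (h : ∀ j, |u j| ≤ c) : ‖u‖ ≤ Real.sqrt n * c := by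
  rw [EuclideanSpace.norm_eq]
  have : ∑ j, u j ^ 2 ≤ n * c ^ 2 := by
    calc ∑ j, u j ^ 2 ≤ ∑ _j : Fin n, c ^ 2 := by
          apply Finset.sum_le_sum
          intro j _
          have := h j
          nlinarith [abs_nonneg (u j), sq_abs (u j)]
      _ = n * c ^ 2 := by simp [mul_comm]
    
  calc Real.sqrt (∑ j, ‖u j‖ ^ 2) ≤ Real.sqrt (n * c ^ 2) := by
        apply Real.sqrt_le_sqrt
        simpa [Real.norm_eq_abs, sq_abs] using this
    _ = Real.sqrt n * c := by
        rw [Real.sqrt_mul (by positivity), Real.sqrt_sq hc]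

lemma norm_le_specNorm_inv_mul {n : ℕ} (M : Matrix (Fin n) (Fin n) ℝ)
    (hM : IsUnit M.det) (w : EuclideanSpace ℝ (Fin n)) :
    ‖w‖ ≤ specNorm M⁻¹ * ‖(Matrix.toEuclideanCLM (𝕜 := ℝ) M) w‖ := by
  have hinv : (Matrix.toEuclideanCLM (𝕜 := ℝ) M⁻¹) ((Matrix.toEuclideanCLM (𝕜 := ℝ) M) w) = w := by
    have : M⁻¹ * M = 1 := Matrix.nonsing_inv_mul M hM
    calc (Matrix.toEuclideanCLM (𝕜 := ℝ) M⁻¹) ((Matrix.toEuclideanCLM (𝕜 := ℝ) M) w)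
        = (Matrix.toEuclideanCLM (𝕜 := ℝ) (M⁻¹ * M)) w := by
          rw [map_mul]; rfl
      _ = w := by rw [this, map_one]; rfl
  calc ‖w‖ = ‖(Matrix.toEuclideanCLM (𝕜 := ℝ) M⁻¹) ((Matrix.toEuclideanCLM (𝕜 := ℝ) M) w)‖ := by
        rw [hinv]
    _ ≤ specNorm M⁻¹ * ‖(Matrix.toEuclideanCLM (𝕜 := ℝ) M) w‖ :=
        ContinuousLinearMap.le_opNorm _ _

lemma toEuclideanCLM_apply_coord {n : ℕ} (M : Matrix (Fin n) (Fin n) ℝ)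
    (w : EuclideanSpace ℝ (Fin n)) (j : Fin n) :
    (Matrix.toEuclideanCLM (𝕜 := ℝ) M) w j = ∑ k, M j k * w k := by
  have := Matrix.ofLp_toEuclideanCLM (𝕜 := ℝ) M w
  have h2 := congrFun this j
  simpa [Matrix.mulVec, dotProduct] using h2
lemma mem_subdiff_of_minorant {m : ℕ} (O O' : Set (EuclideanSpace ℝ (Fin m)))
    (hO' : IsOpen O') (hO'O : O' ⊆ O)
    (f φ : EuclideanSpace ℝ (Fin m) → ℝ) (hf : ConvexOn ℝ O f)
    (y : EuclideanSpace ℝ (Fin m)) (hy : y ∈ O')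
    (g : EuclideanSpace ℝ (Fin m)) (hg : HasGradientAt φ g y)
    (hle : ∀ x ∈ O', φ x ≤ f x) (heq : φ y = f y) :
    g ∈ subdiff O f y := by
  intro z hz
  set d := z - y with hd
  have hder : HasDerivAt (fun s : ℝ => φ (y + s • d)) ⟪g, d⟫ 0 := by
    have h1 : HasDerivAt (fun s : ℝ => y + s • d) d 0 := by
      simpa using ((hasDerivAt_id (0:ℝ)).smul_const d).const_add y
    have h2 : HasFDerivAt φ (InnerProductSpace.toDual ℝ _ g) (y + (0:ℝ) • d) := by
      simpa using hg.hasFDerivAt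
    have := h2.comp_hasDerivAt 0 h1
    simpa [InnerProductSpace.toDual_apply_apply, Function.comp_def] using this
  rw [hasDerivAt_iff_tendsto_slope] at hder
  have hten : Filter.Tendsto (slope (fun s : ℝ => φ (y + s • d)) 0) (nhdsWithin 0 (Set.Ioi 0))
      (nhds ⟪g, d⟫) :=
    hder.mono_left (nhdsWithin_mono 0 (fun s hs => ne_of_gt hs))
  have hev : ∀ᶠ s in nhdsWithin (0:ℝ) (Set.Ioi 0),
      slope (fun s : ℝ => φ (y + s • d)) 0 s ≤ f z - f y := by
    have hmem : ∀ᶠ s in nhds (0:ℝ), y + s • d ∈ O' := by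
      have hcont : Continuous (fun s : ℝ => y + s • d) := by continuity
      exact hcont.continuousAt.preimage_mem_nhds (by simpa using hO'.mem_nhds hy)
    have hlt : ∀ᶠ s in nhds (0:ℝ), s < 1 := eventually_lt_nhds one_pos
    have hIoi : ∀ᶠ s in nhdsWithin (0:ℝ) (Set.Ioi 0), s ∈ Set.Ioi (0:ℝ) :=
      eventually_mem_nhdsWithin
    filter_upwards [(hmem.and hlt).filter_mono nhdsWithin_le_nhds, hIoi]
      with s hs hs0
    obtain ⟨hsO', hs1⟩ := hs
    have hs0' : (0:ℝ) < s := hs0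
    have hpt : (1 - s) • y + s • z = y + s • d := by
      simp [hd, smul_sub, sub_smul]; abel
    have hconv := hf.2 (hO'O hy) hz (by linarith : (0:ℝ) ≤ 1 - s) (le_of_lt hs0')
      (by ring)
    rw [hpt] at hconv
    have hφ : φ (y + s • d) ≤ f (y + s • d) := hle _ hsO'
    have hslope : slope (fun s : ℝ => φ (y + s • d)) 0 s
        = (φ (y + s • d) - φ y) / s := by
      simp [slope_def_field]
    rw [hslope, div_le_iff₀ hs0']
    have : (1 - s) * f y + s * f z - f y = s * (f z - f y) := by ring
    have h3 : φ (y + s • d) ≤ (1 - s) * f y + s * f z := le_trans hφ hconv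
    rw [heq]
    linarith [h3, this]
  have h := le_of_tendsto hten hev
  linarith [h]
lemma model_grad_error {m : ℕ} (hm : 1 ≤ m)
    (X O' : Set (EuclideanSpace ℝ (Fin m))) (hO'open : IsOpen O') (hXO' : X ⊆ O')
    (g : EuclideanSpace ℝ (Fin m) → ℝ) (hg : DifferentiableOn ℝ g O')
    (Kf : ℝ) (hKf0 : 0 ≤ Kf)
    (hLip : ∀ x ∈ X, ∀ z ∈ X, ‖gradient g x - gradient g z‖ ≤ Kf * ‖x - z‖)
    (Y : Fin (m+1) → EuclideanSpace ℝ (Fin m)) (hp : Poised Y)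
    (Δ : ℝ) (hΔ : IsGreatest (Set.range fun i : Fin m => ‖Y i.succ - Y 0‖) Δ)
    (hball : Metric.closedBall (Y 0) Δ ⊆ X)
    (y : EuclideanSpace ℝ (Fin m)) (hy : y ∈ Metric.closedBall (Y 0) Δ)
    (a : EuclideanSpace ℝ (Fin m))
    (hinterp : ∀ j : Fin m, ⟪a, Y j.succ - Y 0⟫ = g (Y j.succ) - g (Y 0)) :
    ‖a - gradient g y‖ ≤ Kf * (1 + Real.sqrt m * specNorm (Δ⁻¹ • Lmat Y)⁻¹ / 2) * Δ := by
  have hΔpos : 0 < Δ := delta_pos hm Y hp hΔ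
  have hY0X : Y 0 ∈ X := hball (Metric.mem_closedBall_self hΔpos.le)
  set g₀ := gradient g (Y 0) with hg₀
  have step1 : ∀ j : Fin m, |⟪a - g₀, Y j.succ - Y 0⟫| ≤ Kf / 2 * Δ ^ 2 := by
    intro j
    have hbΔ : ‖Y j.succ - Y 0‖ ≤ Δ := hΔ.2 ⟨j, rfl⟩
    have hsegX : ∀ s ∈ Set.Icc (0:ℝ) 1, Y 0 + s • (Y j.succ - Y 0) ∈ X := by
      intro s hs
      apply hball
      rw [Metric.mem_closedBall, dist_eq_norm, add_sub_cancel_left, norm_smul,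
        Real.norm_eq_abs, abs_of_nonneg hs.1]
      calc s * ‖Y j.succ - Y 0‖ ≤ 1 * Δ := by
            apply mul_le_mul hs.2 hbΔ (norm_nonneg _) zero_le_one
        _ = Δ := one_mul Δ
    have htay := taylor_quad g O' hO'open (Y 0) (Y j.succ) Kf
      (fun s hs => hXO' (hsegX s hs)) hg
      (fun s hs => by
        have := hLip _ (hsegX s hs) _ hY0X
        rw [add_sub_cancel_left, norm_smul, Real.norm_eq_abs, abs_of_nonneg hs.1] at this
        simpa [mul_assoc] using this)
    have heq : ⟪a - g₀, Y j.succ - Y 0⟫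
        = g (Y j.succ) - g (Y 0) - ⟪g₀, Y j.succ - Y 0⟫ := by
      rw [inner_sub_left, hinterp j]
    rw [heq]
    calc |g (Y j.succ) - g (Y 0) - ⟪g₀, Y j.succ - Y 0⟫|
        ≤ Kf / 2 * ‖Y j.succ - Y 0‖ ^ 2 := htay
      _ ≤ Kf / 2 * Δ ^ 2 := by
          apply mul_le_mul_of_nonneg_left _ (by positivity)
          exact pow_le_pow_left₀ (norm_nonneg _) hbΔ 2
  set w : EuclideanSpace ℝ (Fin m) := a - g₀ with hw
  set u := (Matrix.toEuclideanCLM (𝕜 := ℝ) (Lmat Y)) w with hu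
  have hucoord : ∀ j, u j = ⟪a - g₀, Y j.succ - Y 0⟫ := by
    intro j
    rw [hu, toEuclideanCLM_apply_coord, real_inner_comm, PiLp.inner_apply]
    apply Finset.sum_congr rfl
    intro k _
    simp [Lmat, hw]; ring
  have hub : ‖u‖ ≤ Real.sqrt m * (Kf / 2 * Δ ^ 2) := by
    apply norm_le_sqrt_mul u _ (by positivity)
    intro j
    rw [hucoord j]
    exact step1 j
  have hdet : IsUnit (Lmat Y).det := isUnit_iff_ne_zero.2 (Lmat_det_ne_zero Y hp)
  have step3 : ‖w‖ ≤ specNorm (Lmat Y)⁻¹ * (Real.sqrt m * (Kf / 2 * Δ ^ 2)) := by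
    calc ‖w‖ ≤ specNorm (Lmat Y)⁻¹ * ‖u‖ := norm_le_specNorm_inv_mul _ hdet w
      _ ≤ _ := mul_le_mul_of_nonneg_left hub (norm_nonneg _)
  have step4 : specNorm (Δ⁻¹ • Lmat Y)⁻¹ = Δ * specNorm (Lmat Y)⁻¹ := by
    have : Invertible (Δ⁻¹) := invertibleOfNonzero (inv_ne_zero hΔpos.ne')
    have hinv : (Δ⁻¹ • Lmat Y)⁻¹ = Δ • (Lmat Y)⁻¹ := by
      rw [Matrix.inv_smul (A := Lmat Y) Δ⁻¹ hdet, invOf_eq_inv, inv_inv]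
    rw [specNorm, hinv]
    have hsmul : (Matrix.toEuclideanCLM (𝕜 := ℝ) (Δ • (Lmat Y)⁻¹))
        = Δ • (Matrix.toEuclideanCLM (𝕜 := ℝ) ((Lmat Y)⁻¹)) := map_smul _ _ _
    rw [hsmul]
    exact (norm_smul Δ (Matrix.toEuclideanCLM (𝕜 := ℝ) ((Lmat Y)⁻¹) :
        EuclideanSpace ℝ (Fin m) →L[ℝ] EuclideanSpace ℝ (Fin m))).trans
      (by rw [Real.norm_eq_abs, abs_of_pos hΔpos, specNorm])
  have hyX : y ∈ X := hball hy
  have step5 : ‖g₀ - gradient g y‖ ≤ Kf * Δ := by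
    calc ‖g₀ - gradient g y‖ ≤ Kf * ‖Y 0 - y‖ := hLip _ hY0X _ hyX
      _ ≤ Kf * Δ := by
          apply mul_le_mul_of_nonneg_left _ hKf0
          rw [← dist_eq_norm, dist_comm]
          exact hy
  have hS : 0 ≤ specNorm (Lmat Y)⁻¹ := norm_nonneg _
  calc ‖a - gradient g y‖ = ‖w + (g₀ - gradient g y)‖ := by rw [hw, sub_add_sub_cancel]
    _ ≤ ‖w‖ + ‖g₀ - gradient g y‖ := norm_add_le _ _
    _ ≤ specNorm (Lmat Y)⁻¹ * (Real.sqrt m * (Kf / 2 * Δ ^ 2)) + Kf * Δ := by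
        linarith [step3, step5]
    _ = Kf * (1 + Real.sqrt m * specNorm (Δ⁻¹ • Lmat Y)⁻¹ / 2) * Δ := by
        rw [step4]; ring
theorem approximate_subgradient_error_bound {m : ℕ} (hm : 1 ≤ m)
    (O : Set (EuclideanSpace ℝ (Fin m))) (hOne : O.Nonempty) (hOopen : IsOpen O)
    (hOconv : Convex ℝ O)
    (f : EuclideanSpace ℝ (Fin m) → ℝ) (hf : ConvexOn ℝ O f)
    (X : Set (EuclideanSpace ℝ (Fin m))) (hXne : X.Nonempty) (hXcpt : IsCompact X)
    (hXconv : Convex ℝ X) (hXO : X ⊆ O)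
    (O' : Set (EuclideanSpace ℝ (Fin m))) (hO'open : IsOpen O')
    (hXO' : X ⊆ O') (hO'O : O' ⊆ O)
    (T : Type) [TopologicalSpace T] [CompactSpace T]
    (ft : T → EuclideanSpace ℝ (Fin m) → ℝ)
    (hrep : IsLowerC2Rep T f ft O')
    (Kf : ℝ) (hKf0 : 0 ≤ Kf)
    (hLip : ∀ t : T, ∀ x ∈ X, ∀ y ∈ X,
      ‖gradient (ft t) x - gradient (ft t) y‖ ≤ Kf * ‖x - y‖)
    (Y : Fin (m + 1) → EuclideanSpace ℝ (Fin m)) (hY0 : Y 0 ∈ X)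
    (hpoised : Poised Y)
    (Δ : ℝ) (hΔ : IsGreatest (Set.range fun i : Fin m => ‖Y i.succ - Y 0‖) Δ)
    (hball : Metric.closedBall (Y 0) Δ ⊆ X)
    (y : EuclideanSpace ℝ (Fin m)) (hy : y ∈ Metric.closedBall (Y 0) Δ)
    (r : ℕ) (hr : 1 ≤ r)
    (ts : Fin r → T) (hts : ∀ i, ft (ts i) y = f y)
    (lam : Fin r → ℝ) (hlam0 : ∀ i, 0 ≤ lam i) (hlam1 : ∀ i, lam i ≤ 1)
    (hlamsum : ∑ i, lam i = 1)
    (F : Fin r → EuclideanSpace ℝ (Fin m) → ℝ)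
    (hFaff : ∀ i, ∃ (a₀ : ℝ) (a : EuclideanSpace ℝ (Fin m)),
      F i = fun x => a₀ + ⟪a, x⟫)
    (hFinterp : ∀ i, ∀ j, F i (Y j) = ft (ts i) (Y j))
    (V : EuclideanSpace ℝ (Fin m)) (hV : V = ∑ i, lam i • gradient (F i) y) :
    ∃ v ∈ subdiff O f y,
      ‖V - v‖ ≤ Kf * (1 + Real.sqrt (m : ℝ) * specNorm (Δ⁻¹ • Lmat Y)⁻¹ / 2) * Δ := by
  have hyX : y ∈ X := hball hy
  have hyO' : y ∈ O' := hXO' hyX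
  obtain ⟨hC2, hc1, hc2, hc3, hmax⟩ := hrep
  set gi : Fin r → EuclideanSpace ℝ (Fin m) := fun i => gradient (ft (ts i)) y with hgi
  have hdiffO' : ∀ t, DifferentiableOn ℝ (ft t) O' := fun t =>
    (hC2 t).differentiableOn two_ne_zero
  have hgrad : ∀ i, HasGradientAt (ft (ts i)) (gi i) y := fun i =>
    ((hdiffO' (ts i)).differentiableAt (hO'open.mem_nhds hyO')).hasGradientAt
  set v := ∑ i, lam i • gi i with hv
  have hΔpos : 0 < Δ := delta_pos hm Y hpoised hΔ
  refine ⟨v, ?_, ?_⟩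
  · -- subdifferential membership
    intro z hz
    have hsub : ∀ i, gi i ∈ subdiff O f y := fun i =>
      mem_subdiff_of_minorant O O' hO'open hO'O f (ft (ts i)) hf y hyO' (gi i) (hgrad i)
        (fun x hx => (hmax x hx).1 (ts i)) (hts i)
    have hEach : ∀ i, f y + ⟪gi i, z - y⟫ ≤ f z := fun i => hsub i z hz
    have hinner : ⟪v, z - y⟫ = ∑ i, lam i * ⟪gi i, z - y⟫ := by
      rw [hv, sum_inner]
      exact Finset.sum_congr rfl fun i _ => real_inner_smul_left _ _ _
    calc f y + ⟪v, z - y⟫ = ∑ i, lam i * (f y + ⟪gi i, z - y⟫) := by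
          rw [hinner]
          simp only [mul_add, Finset.sum_add_distrib, ← Finset.sum_mul, hlamsum, one_mul]
      _ ≤ ∑ i, lam i * f z :=
          Finset.sum_le_sum fun i _ => mul_le_mul_of_nonneg_left (hEach i) (hlam0 i)
      _ = f z := by rw [← Finset.sum_mul, hlamsum, one_mul]
  · -- error bound
    set C : ℝ := Kf * (1 + Real.sqrt (m : ℝ) * specNorm (Δ⁻¹ • Lmat Y)⁻¹ / 2) * Δ with hC
    have hperi : ∀ i, ‖gradient (F i) y - gi i‖ ≤ C := by
      intro i
      obtain ⟨a₀, a, ha⟩ := hFaff i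
      have hga : ∀ x, HasGradientAt (F i) a x := fun x => by
        rw [ha]; exact gradAffine a₀ a x
      have hgFi : gradient (F i) y = a := (hga y).gradient
      have hinterp : ∀ j : Fin m, ⟪a, Y j.succ - Y 0⟫
          = ft (ts i) (Y j.succ) - ft (ts i) (Y 0) := by
        intro j
        rw [← hFinterp i j.succ, ← hFinterp i 0, ha]
        simp only [inner_sub_right]
        ring
      have := model_grad_error hm X O' hO'open hXO' (ft (ts i)) (hdiffO' (ts i))
        Kf hKf0 (hLip (ts i)) Y hpoised Δ hΔ hball y hy a hinterp
      rw [hgFi, hC]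
      exact this
    have hCnn : 0 ≤ C := le_trans (norm_nonneg _) (hperi ⟨0, hr⟩)
    have hVv : V - v = ∑ i, lam i • (gradient (F i) y - gi i) := by
      rw [hV, hv, ← Finset.sum_sub_distrib]
      exact Finset.sum_congr rfl fun i _ => (smul_sub _ _ _).symm
    calc ‖V - v‖ = ‖∑ i, lam i • (gradient (F i) y - gi i)‖ := by rw [hVv]
      _ ≤ ∑ i, ‖lam i • (gradient (F i) y - gi i)‖ := norm_sum_le _ _
      _ ≤ ∑ i, lam i * C := by
          apply Finset.sum_le_sum
          intro i _
          rw [norm_smul, Real.norm_eq_abs, abs_of_nonneg (hlam0 i)]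
          exact mul_le_mul_of_nonneg_left (hperi i) (hlam0 i)
      _ = C := by rw [← Finset.sum_mul, hlamsum, one_mul]
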